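/- Let σ_s, σ_a : (0,1) → ℝ with σ_s(x) ≥ s₀ > 0 and 0 < σ_a(x) ≤ a₁ for all x. For each Kn ∈ (0,1], let f_Kn, g_Kn : (0,1) × [-1,1] → ℝ be continuous, continuously differentiable in x with jointly continuous x-derivatives, satisfying v·∂ₓf_Kn = (σ_s/Kn)·(⟨f_Kn⟩ − f_Kn) − Kn·σ_a·f_Kn and −v·∂ₓg_Kn = (σ_s/Kn)·(⟨g_Kn⟩ − g_Kn) − Kn·σ_a·g_Kn pointwise, and assume the uniform bound sup_{Kn∈(0,1]} sup_{x∈(0,1)} |(d/dx)(⟨f_Kn⟩·⟨g_Kn⟩)(x)| ≤ M < ∞. Then for γ_Kn(x) := (1/Kn)·(⟨f_Kn⟩(x)·⟨g_Kn⟩(x) − ⟨f_Kn g_Kn⟩(x)) one has sup_{x∈(0,1)} |(d/dx)γ_Kn(x)| ≤ (a₁·M/s₀)·Kn for every Kn ∈ (0,1]; in particular (d/dx)γ_Kn → 0 uniformly as Kn → 0. -/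

import Mathlib

open MeasureTheory Set

/-- Velocity average `⟨h⟩(x) = (1/2)∫_{-1}^{1} h(x,v) dv`. -/
noncomputable def vavg (h : ℝ → ℝ → ℝ) (x : ℝ) : ℝ := (1 / 2) * ∫ v in (-1 : ℝ)..1, h x v

lemma contOn_slice {h : ℝ → ℝ → ℝ}
    (hc : ContinuousOn (fun p : ℝ × ℝ => h p.1 p.2) (Ioo 0 1 ×ˢ Icc (-1) 1))
    {y : ℝ} (hy : y ∈ Ioo (0:ℝ) 1) :
    ContinuousOn (fun v => h y v) (Icc (-1:ℝ) 1) := by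
  have : ContinuousOn (fun v : ℝ => ((y, v) : ℝ × ℝ)) (Icc (-1:ℝ) 1) :=
    (continuous_const.prodMk continuous_id).continuousOn
  exact hc.comp this (fun v hv => ⟨hy, hv⟩)

lemma slice_aesm {h : ℝ → ℝ → ℝ}
    (hc : ContinuousOn (fun p : ℝ × ℝ => h p.1 p.2) (Ioo 0 1 ×ˢ Icc (-1) 1))
    {y : ℝ} (hy : y ∈ Ioo (0:ℝ) 1) :
    AEStronglyMeasurable (fun v => h y v) (volume.restrict (uIoc (-1:ℝ) 1)) := by
  have h1 : AEStronglyMeasurable (fun v => h y v) (volume.restrict (Icc (-1:ℝ) 1)) := (contOn_slice hc hy).aestronglyMeasurable measurableSet_Icc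
  exact h1.mono_measure (Measure.restrict_mono (by rw [uIoc_of_le (by norm_num : (-1:ℝ) ≤ 1)]; exact Ioc_subset_Icc_self) le_rfl)

lemma slice_intervalIntegrable {h : ℝ → ℝ → ℝ}
    (hc : ContinuousOn (fun p : ℝ × ℝ => h p.1 p.2) (Ioo 0 1 ×ˢ Icc (-1) 1))
    {y : ℝ} (hy : y ∈ Ioo (0:ℝ) 1) :
    IntervalIntegrable (fun v => h y v) volume (-1) 1 :=
  ((contOn_slice hc hy).mono (by rw [uIcc_of_le (by norm_num : (-1:ℝ) ≤ 1)])).intervalIntegrable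

lemma vavg_hasDerivAt (h hx : ℝ → ℝ → ℝ)
    (hc : ContinuousOn (fun p : ℝ × ℝ => h p.1 p.2) (Ioo 0 1 ×ˢ Icc (-1) 1))
    (hxc : ContinuousOn (fun p : ℝ × ℝ => hx p.1 p.2) (Ioo 0 1 ×ˢ Icc (-1) 1))
    (hd : ∀ x ∈ Ioo (0:ℝ) 1, ∀ v ∈ Icc (-1:ℝ) 1, HasDerivAt (fun y => h y v) (hx x v) x)
    (x : ℝ) (hx0 : x ∈ Ioo (0:ℝ) 1) :
    HasDerivAt (vavg h) (vavg hx x) x := by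
  obtain ⟨hx1, hx2⟩ := hx0
  set ε : ℝ := min x (1 - x) / 2 with hεdef
  have hεpos : 0 < ε := by
    have : 0 < min x (1 - x) := lt_min hx1 (by linarith)
    positivity
  have h1 : min x (1 - x) ≤ x := min_le_left _ _
  have h2 : min x (1 - x) ≤ 1 - x := min_le_right _ _
  have hball : Metric.ball x ε ⊆ Ioo (0:ℝ) 1 := by
    intro y hy
    rw [Metric.mem_ball, Real.dist_eq, abs_lt] at hy
    exact ⟨by linarith [hy.1], by linarith [hy.2]⟩
  have hIcc : Icc (x - ε) (x + ε) ⊆ Ioo (0:ℝ) 1 := fun y hy =>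
    ⟨by linarith [hy.1], by linarith [hy.2]⟩
  have hK : IsCompact (Icc (x - ε) (x + ε) ×ˢ Icc (-1:ℝ) 1) :=
    isCompact_Icc.prod isCompact_Icc
  have hsub : (Icc (x - ε) (x + ε) ×ˢ Icc (-1:ℝ) 1) ⊆ Ioo 0 1 ×ˢ Icc (-1) 1 :=
    prod_mono hIcc subset_rfl
  obtain ⟨C, hC⟩ := hK.exists_bound_of_continuousOn (hxc.mono hsub)
  have key := intervalIntegral.hasDerivAt_integral_of_dominated_loc_of_deriv_le
    (F := fun y v => h y v) (F' := fun y v => hx y v) (x₀ := x) (a := (-1:ℝ)) (b := 1)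
    (bound := fun _ => C) (μ := volume) (s := Metric.ball x ε) (Metric.ball_mem_nhds x hεpos)
    (Filter.eventually_of_mem (Metric.ball_mem_nhds x hεpos)
      (fun y hy => slice_aesm hc (hball hy)))
    (slice_intervalIntegrable hc ⟨hx1, hx2⟩)
    (slice_aesm hxc ⟨hx1, hx2⟩)
    (Filter.Eventually.of_forall (fun v hv y hy => by
      have hv' : v ∈ Icc (-1:ℝ) 1 := Ioc_subset_Icc_self (by
        rwa [uIoc_of_le (by norm_num : (-1:ℝ) ≤ 1)] at hv)
      have hy' : y ∈ Icc (x - ε) (x + ε) := by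
        rw [Metric.mem_ball, Real.dist_eq, abs_lt] at hy
        exact ⟨by linarith [hy.1], by linarith [hy.2]⟩
      exact hC (y, v) ⟨hy', hv'⟩))
    intervalIntegrable_const
    (Filter.Eventually.of_forall (fun v hv y hy => by
      have hv' : v ∈ Icc (-1:ℝ) 1 := Ioc_subset_Icc_self (by
        rwa [uIoc_of_le (by norm_num : (-1:ℝ) ≤ 1)] at hv)
      exact hd y (hball hy) v hv'))
  exact (key.2.const_mul (1/2 : ℝ))

/-- **Quantitative Proposition 4.3.**  With `σ_s ≥ s₀ > 0`, `0 < σ_a ≤ a₁`, and a uniform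
bound `M` on `|(d/dx)(⟨f_Kn⟩⟨g_Kn⟩)|`, the kernel
`γ_Kn = (1/Kn)(⟨f_Kn⟩⟨g_Kn⟩ − ⟨f_Kn g_Kn⟩)` satisfies
`|(d/dx)γ_Kn(x)| ≤ (a₁·M/s₀)·Kn` for all `x ∈ (0,1)` and all `Kn ∈ (0,1]`. -/
theorem gamma_deriv_uniform_bound_subcritical_1D
    (σs σa : ℝ → ℝ) (s₀ a₁ M : ℝ) (hs₀ : 0 < s₀) (ha₁ : 0 < a₁)
    (hσs : ∀ x ∈ Ioo (0 : ℝ) 1, s₀ ≤ σs x)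
    (hσa : ∀ x ∈ Ioo (0 : ℝ) 1, 0 < σa x ∧ σa x ≤ a₁)
    (f g fx gx : ℝ → ℝ → ℝ → ℝ)
    (hf_cont : ∀ Kn ∈ Ioc (0 : ℝ) 1,
      ContinuousOn (fun p : ℝ × ℝ => f Kn p.1 p.2) (Ioo 0 1 ×ˢ Icc (-1) 1))
    (hg_cont : ∀ Kn ∈ Ioc (0 : ℝ) 1,
      ContinuousOn (fun p : ℝ × ℝ => g Kn p.1 p.2) (Ioo 0 1 ×ˢ Icc (-1) 1))
    (hfx_cont : ∀ Kn ∈ Ioc (0 : ℝ) 1,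
      ContinuousOn (fun p : ℝ × ℝ => fx Kn p.1 p.2) (Ioo 0 1 ×ˢ Icc (-1) 1))
    (hgx_cont : ∀ Kn ∈ Ioc (0 : ℝ) 1,
      ContinuousOn (fun p : ℝ × ℝ => gx Kn p.1 p.2) (Ioo 0 1 ×ˢ Icc (-1) 1))
    (hf_deriv : ∀ Kn ∈ Ioc (0 : ℝ) 1, ∀ x ∈ Ioo (0 : ℝ) 1, ∀ v ∈ Icc (-1 : ℝ) 1,
      HasDerivAt (fun y => f Kn y v) (fx Kn x v) x)
    (hg_deriv : ∀ Kn ∈ Ioc (0 : ℝ) 1, ∀ x ∈ Ioo (0 : ℝ) 1, ∀ v ∈ Icc (-1 : ℝ) 1,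
      HasDerivAt (fun y => g Kn y v) (gx Kn x v) x)
    (hfeq : ∀ Kn ∈ Ioc (0 : ℝ) 1, ∀ x ∈ Ioo (0 : ℝ) 1, ∀ v ∈ Icc (-1 : ℝ) 1,
      v * fx Kn x v = (σs x / Kn) * (vavg (f Kn) x - f Kn x v) - Kn * σa x * f Kn x v)
    (hgeq : ∀ Kn ∈ Ioc (0 : ℝ) 1, ∀ x ∈ Ioo (0 : ℝ) 1, ∀ v ∈ Icc (-1 : ℝ) 1,
      -(v * gx Kn x v) = (σs x / Kn) * (vavg (g Kn) x - g Kn x v) - Kn * σa x * g Kn x v)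
    (D : ℝ → ℝ → ℝ)
    (hD : ∀ Kn ∈ Ioc (0 : ℝ) 1, ∀ x ∈ Ioo (0 : ℝ) 1,
      HasDerivAt (fun y => vavg (f Kn) y * vavg (g Kn) y) (D Kn x) x)
    (hM : ∀ Kn ∈ Ioc (0 : ℝ) 1, ∀ x ∈ Ioo (0 : ℝ) 1, |D Kn x| ≤ M) :
    ∀ Kn ∈ Ioc (0 : ℝ) 1, ∀ x ∈ Ioo (0 : ℝ) 1, ∃ dγ : ℝ,
      HasDerivAt
        (fun y => (1 / Kn) *
          (vavg (f Kn) y * vavg (g Kn) y - vavg (fun y v => f Kn y v * g Kn y v) y))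
        dγ x ∧
      |dγ| ≤ a₁ * M / s₀ * Kn := by
  intro Kn hKn x hx
  obtain ⟨hKn0, hKn1⟩ := hKn
  have hKn0' : Kn ≠ 0 := ne_of_gt hKn0
  set a := σs x with ha
  set s := σa x with hs
  have has : s₀ ≤ a := hσs x hx
  have hspos : 0 < s := (hσa x hx).1
  have hsa₁ : s ≤ a₁ := (hσa x hx).2
  have hden : 0 < a + Kn^2 * s := by nlinarith
  -- derivatives of the averages
  have d1 : HasDerivAt (vavg (f Kn)) (vavg (fx Kn) x) x :=
    vavg_hasDerivAt _ _ (hf_cont Kn ⟨hKn0, hKn1⟩) (hfx_cont Kn ⟨hKn0, hKn1⟩)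
      (hf_deriv Kn ⟨hKn0, hKn1⟩) x hx
  have d2 : HasDerivAt (vavg (g Kn)) (vavg (gx Kn) x) x :=
    vavg_hasDerivAt _ _ (hg_cont Kn ⟨hKn0, hKn1⟩) (hgx_cont Kn ⟨hKn0, hKn1⟩)
      (hg_deriv Kn ⟨hKn0, hKn1⟩) x hx
  set Pf := vavg (f Kn) x with hPf
  set Pg := vavg (g Kn) x with hPg
  set If := vavg (fx Kn) x with hIf
  set Ig := vavg (gx Kn) x with hIg
  -- derivative of ⟨fg⟩
  have pc : ContinuousOn (fun p : ℝ × ℝ => f Kn p.1 p.2 * g Kn p.1 p.2)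
      (Ioo 0 1 ×ˢ Icc (-1) 1) := (hf_cont Kn ⟨hKn0, hKn1⟩).mul (hg_cont Kn ⟨hKn0, hKn1⟩)
  have pxc : ContinuousOn
      (fun p : ℝ × ℝ => fx Kn p.1 p.2 * g Kn p.1 p.2 + f Kn p.1 p.2 * gx Kn p.1 p.2)
      (Ioo 0 1 ×ˢ Icc (-1) 1) :=
    ((hfx_cont Kn ⟨hKn0, hKn1⟩).mul (hg_cont Kn ⟨hKn0, hKn1⟩)).add
      ((hf_cont Kn ⟨hKn0, hKn1⟩).mul (hgx_cont Kn ⟨hKn0, hKn1⟩))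
  have d3 : HasDerivAt (vavg (fun y v => f Kn y v * g Kn y v))
      (vavg (fun y v => fx Kn y v * g Kn y v + f Kn y v * gx Kn y v) x) x :=
    vavg_hasDerivAt _ _ pc pxc
      (fun y hy v hv => (hf_deriv Kn ⟨hKn0, hKn1⟩ y hy v hv).mul
        (hg_deriv Kn ⟨hKn0, hKn1⟩ y hy v hv)) x hx
  -- D Kn x equals the product-rule value
  have hDval : D Kn x = If * Pg + Pf * Ig := (hD Kn ⟨hKn0, hKn1⟩ x hx).unique (d1.mul d2)
  -- pointwise identity on Icc
  have hpt : ∀ v ∈ Icc (-1:ℝ) 1,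
      fx Kn x v * g Kn x v + f Kn x v * gx Kn x v
        = (a / (a + Kn^2 * s)) * (Pf * gx Kn x v + Pg * fx Kn x v) := by
    intro v hv
    have e1 := hfeq Kn ⟨hKn0, hKn1⟩ x hx v hv
    have e2 := hgeq Kn ⟨hKn0, hKn1⟩ x hx v hv
    have e1' : Kn * (v * fx Kn x v)
        = a * (Pf - f Kn x v) - Kn^2 * s * f Kn x v := by
      rw [e1]; field_simp; ring
    have e2' : Kn * (-(v * gx Kn x v))
        = a * (Pg - g Kn x v) - Kn^2 * s * g Kn x v := by
      rw [e2]; field_simp; ring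
    have key : (a + Kn^2 * s) * (fx Kn x v * g Kn x v + f Kn x v * gx Kn x v)
        = a * (Pf * gx Kn x v + Pg * fx Kn x v) := by
      linear_combination (gx Kn x v) * e1' + (fx Kn x v) * e2'
    field_simp
    linarith [key]
  -- integrate the identity
  have hintf : IntervalIntegrable (fun v => fx Kn x v) volume (-1) 1 :=
    slice_intervalIntegrable (hfx_cont Kn ⟨hKn0, hKn1⟩) hx
  have hintg : IntervalIntegrable (fun v => gx Kn x v) volume (-1) 1 :=
    slice_intervalIntegrable (hgx_cont Kn ⟨hKn0, hKn1⟩) hx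
  have havg : vavg (fun y v => fx Kn y v * g Kn y v + f Kn y v * gx Kn y v) x
      = (a / (a + Kn^2 * s)) * (Pf * Ig + Pg * If) := by
    have hcongr : (∫ v in (-1:ℝ)..1, (fx Kn x v * g Kn x v + f Kn x v * gx Kn x v))
        = ∫ v in (-1:ℝ)..1,
            (a / (a + Kn^2 * s)) * (Pf * gx Kn x v + Pg * fx Kn x v) := by
      apply intervalIntegral.integral_congr
      intro v hv
      rw [uIcc_of_le (by norm_num : (-1:ℝ) ≤ 1)] at hv
      exact hpt v hv
    rw [vavg, hcongr, intervalIntegral.integral_const_mul,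
      intervalIntegral.integral_add (hintg.const_mul Pf) (hintf.const_mul Pg),
      intervalIntegral.integral_const_mul, intervalIntegral.integral_const_mul]
    simp only [hIf, hIg, vavg]
    ring
  -- assemble
  refine ⟨(1 / Kn) * (D Kn x - (a / (a + Kn^2 * s)) * (Pf * Ig + Pg * If)),
    ((hD Kn ⟨hKn0, hKn1⟩ x hx).sub (havg ▸ d3)).const_mul (1 / Kn), ?_⟩
  have hsimp : (1 / Kn) * (D Kn x - (a / (a + Kn^2 * s)) * (Pf * Ig + Pg * If))
      = D Kn x * (Kn * s / (a + Kn^2 * s)) := by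
    rw [hDval]; field_simp; ring
  rw [hsimp, abs_mul]
  have hDb : |D Kn x| ≤ M := hM Kn ⟨hKn0, hKn1⟩ x hx
  have hM0 : 0 ≤ M := le_trans (abs_nonneg _) hDb
  have hfrac : |Kn * s / (a + Kn^2 * s)| ≤ a₁ / s₀ * Kn := by
    rw [abs_of_nonneg (by positivity)]
    rw [div_le_iff₀ hden]
    have h1 : s₀ ≤ a + Kn^2 * s := by nlinarith
    calc Kn * s ≤ Kn * a₁ := by nlinarith
      _ = a₁ / s₀ * Kn * s₀ := by field_simp
      _ ≤ a₁ / s₀ * Kn * (a + Kn^2 * s) := by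
          have : 0 ≤ a₁ / s₀ * Kn := by positivity
          nlinarith
  calc |D Kn x| * |Kn * s / (a + Kn^2 * s)| ≤ M * (a₁ / s₀ * Kn) := by
        apply mul_le_mul hDb hfrac (abs_nonneg _) hM0
    _ = a₁ * M / s₀ * Kn := by ring
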